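/- If the consistency relation τ^M_L = τ^{M∪{t}}_L + τ^{M∪{t}}_{L∪{t}} holds for all admissible M, L, t, then for all nonempty finite M, all A ⊆ M and nonempty K ⊆ A: τ^A_K = ∑_{J ⊆ M∖A} τ^M_{K∪J}. -/
import Mathlib

private lemma tau_aux {T : Type*} [DecidableEq T] (τ : Finset T → Finset T → ℝ)
    (hcons : ∀ (M L : Finset T) (t : T), M.Nonempty → L.Nonempty → L ⊆ M → t ∉ M →
      τ M L = τ (insert t M) L + τ (insert t M) (insert t L))
    (D : Finset T) : ∀ (A K : Finset T), K.Nonempty → K ⊆ A → Disjoint A D →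
      τ A K = ∑ J ∈ D.powerset, τ (A ∪ D) (K ∪ J) := by
  induction D using Finset.induction_on with
  | empty => intro A K hK hKA _; simp
  | @insert t D ht ih =>
    intro A K hK hKA hdisj
    have htA : t ∉ A := fun h => (Finset.disjoint_left.mp hdisj h (Finset.mem_insert_self t D))
    have hdisj' : Disjoint (insert t A) D := by
      rw [Finset.disjoint_insert_left]
      exact ⟨ht, (Finset.disjoint_insert_right.mp hdisj).2⟩
    have h1 := ih (insert t A) K hK (hKA.trans (Finset.subset_insert t A)) hdisj'
    have h2 := ih (insert t A) (insert t K) ⟨t, Finset.mem_insert_self t K⟩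
      (Finset.insert_subset_insert t hKA) hdisj'
    have hU : insert t A ∪ D = A ∪ insert t D := by
      ext x; simp [Finset.mem_insert, Finset.mem_union]
    rw [hcons A K t (hK.mono hKA) hK hKA htA, h1, h2,
      Finset.sum_powerset_insert ht]
    rw [hU]
    congr 1
    apply Finset.sum_congr rfl
    intro J _
    congr 1
    ext x; simp [Finset.mem_insert, Finset.mem_union]

/-- If the family `(τ^M_L)` satisfies the consistency relation
`τ^M_L = τ^{M∪{t}}_L + τ^{M∪{t}}_{L∪{t}}` for all admissible `M, L, t`, then for every
nonempty finite `M`, every `A ⊆ M` and every nonempty `K ⊆ A`: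
`τ^A_K = ∑_{J ⊆ M∖A} τ^M_{K∪J}`. -/
theorem tau_telescoping {T : Type*} [DecidableEq T] (τ : Finset T → Finset T → ℝ)
    (hcons : ∀ (M L : Finset T) (t : T), M.Nonempty → L.Nonempty → L ⊆ M → t ∉ M →
      τ M L = τ (insert t M) L + τ (insert t M) (insert t L))
    (M A K : Finset T) (hM : M.Nonempty) (hAM : A ⊆ M) (hK : K.Nonempty) (hKA : K ⊆ A) :
    τ A K = ∑ J ∈ (M \ A).powerset, τ M (K ∪ J) := by
  have := tau_aux τ hcons (M \ A) A K hK hKA (Finset.disjoint_sdiff)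
  rwa [Finset.union_sdiff_of_subset hAM] at this
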